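/- Let G be a finite group, k ≥ 3 an integer, and Θ a finite group acting on G by automorphisms, acting coordinatewise on G^{k−1}. With ΘS(ḡ) := Σ_{θ∈Θ} S(θ(g₁),…,θ(g_{k−1})) ∈ A_k(G) and U(ḡ) := Σ_{θ∈Θ} Σ_{γ̄∈Θ^{k−1}} S((θ(g₁),γ₁),…,(θ(g_{k−1}),γ_{k−1})) ∈ A_k(G⋊Θ), there is a unique ℂ-linear map Φ_k from the span of {ΘS(ḡ) : ḡ ∈ G^{k−1}} into A_k(G⋊Θ) satisfying Φ_k(ΘS(ḡ)) = |Θ|^{−⌊k/2⌋} · |Θ|^{(1−⌈k/2⌉)/2} · U(ḡ) for all ḡ ∈ G^{k−1}; moreover the span of the ΘS(ḡ) is closed under the product of A_k(G), and Φ_k is multiplicative: Φ_k(x·y) = Φ_k(x)·Φ_k(y) for all x, y in that span. -/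

import Mathlib

open Finset

noncomputable section

/-- 1-indexed access into a `(k-1)`-tuple, with default value `1` out of range. -/
def idx1 {H : Type*} [One H] (k : ℕ) (v : Fin (k - 1) → H) (j : ℕ) : H :=
  if h : j - 1 < k - 1 then v ⟨j - 1, h⟩ else 1

/-- The product of two basis vectors `S(x̄)·S(ȳ)` of the `k`-box space `A_k(H)` of the
group planar algebra `P(H)` (Fact 4.4 of the paper). -/
def basisMul {H : Type*} [Group H] [Fintype H] [DecidableEq H] (k : ℕ)
    (x y : Fin (k - 1) → H) : (Fin (k - 1) → H) →₀ ℂ :=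
  ((((Fintype.card H : ℝ) ^ (((((k + 1) / 2 : ℕ) : ℝ) - 1) / 2) : ℝ) : ℂ) *
      ∏ i ∈ Finset.Icc 2 ((k + 1) / 2),
        (if idx1 k y 1 * idx1 k x (k + 1 - i) = idx1 k y i then (1 : ℂ) else 0)) •
    Finsupp.single
      (fun j : Fin (k - 1) =>
        if (j : ℕ) + 1 ≤ (k + 1) / 2 then idx1 k y 1 * x j else y j) (1 : ℂ)

/-- The bilinear product on the `k`-box space `A_k(H) = ℂ[H^{k−1}]`. -/
def mulAk {H : Type*} [Group H] [Fintype H] [DecidableEq H] (k : ℕ)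
    (a b : (Fin (k - 1) → H) →₀ ℂ) : (Fin (k - 1) → H) →₀ ℂ :=
  a.sum fun x ca => b.sum fun y cb => (ca * cb) • basisMul k x y

/-- The `Θ`-orbit sum `ΘS(ḡ) = Σ_{θ∈Θ} S(θ(g₁),…,θ(g_{k−1})) ∈ A_k(G)`. -/
def thetaS {G Θ : Type*} [Group G] [Group Θ] [Fintype Θ] (φ : Θ →* MulAut G)
    (k : ℕ) (g : Fin (k - 1) → G) : (Fin (k - 1) → G) →₀ ℂ :=
  ∑ θ : Θ, Finsupp.single (fun j => φ θ (g j)) (1 : ℂ)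


set_option linter.unusedSectionVars false
set_option maxHeartbeats 1000000

section AuxIdx

lemma idx1_in {H : Type*} [One H] (k : ℕ) (v : Fin (k - 1) → H) (j : ℕ)
    (h : j - 1 < k - 1) : idx1 k v j = v ⟨j - 1, h⟩ := dif_pos h

lemma idx1_map {H H' : Type*} [One H] [One H'] (f : H → H') (hf : f 1 = 1)
    (k : ℕ) (v : Fin (k - 1) → H) (j : ℕ) :
    idx1 k (fun i => f (v i)) j = f (idx1 k v j) := by
  unfold idx1; split <;> simp [hf]

lemma ite_and_mul_cpx (p q : Prop) [Decidable p] [Decidable q] :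
    (if p ∧ q then (1 : ℂ) else 0) = (if p then (1 : ℂ) else 0) * (if q then (1 : ℂ) else 0) := by
  by_cases hp : p <;> by_cases hq : q <;> simp [hp, hq]

end AuxIdx

section AuxBil

variable {H : Type*} [Group H] [Fintype H] [DecidableEq H]

/-- Bilinear (curried) version of `mulAk`. -/
def mulBil (k : ℕ) :
    ((Fin (k - 1) → H) →₀ ℂ) →ₗ[ℂ] ((Fin (k - 1) → H) →₀ ℂ) →ₗ[ℂ] ((Fin (k - 1) → H) →₀ ℂ) :=
  Finsupp.lsum ℂ fun x => LinearMap.toSpanSingleton ℂ _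
    (Finsupp.lsum ℂ fun y => LinearMap.toSpanSingleton ℂ _ (basisMul k x y))

lemma mulAk_eq (k : ℕ) (a b : (Fin (k - 1) → H) →₀ ℂ) :
    mulAk k a b = mulBil k a b := by
  rw [mulAk, mulBil, Finsupp.lsum_apply, Finsupp.sum, Finsupp.sum, LinearMap.sum_apply]
  refine Finset.sum_congr rfl fun x _ => ?_
  rw [LinearMap.toSpanSingleton_apply, LinearMap.smul_apply, Finsupp.lsum_apply,
    Finsupp.sum, Finsupp.sum, Finset.smul_sum]
  refine Finset.sum_congr rfl fun y _ => ?_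
  rw [LinearMap.toSpanSingleton_apply, smul_smul]

lemma mulAk_single_single (k : ℕ) (x y : Fin (k - 1) → H) :
    mulAk k (Finsupp.single x 1) (Finsupp.single y 1) = basisMul k x y := by
  rw [mulAk_eq, mulBil, Finsupp.lsum_single, LinearMap.toSpanSingleton_apply, one_smul,
    Finsupp.lsum_single, LinearMap.toSpanSingleton_apply, one_smul]

lemma mulAk_sum_sum (k : ℕ) {ι κ : Type*} (s : Finset ι) (t : Finset κ)
    (f : ι → (Fin (k - 1) → H) →₀ ℂ) (g : κ → (Fin (k - 1) → H) →₀ ℂ) :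
    mulAk k (∑ i ∈ s, f i) (∑ j ∈ t, g j) = ∑ i ∈ s, ∑ j ∈ t, mulAk k (f i) (g j) := by
  simp only [mulAk_eq, map_sum, LinearMap.sum_apply]
  exact Finset.sum_comm

lemma mulAk_smul_smul (k : ℕ) (c d : ℂ) (a b : (Fin (k - 1) → H) →₀ ℂ) :
    mulAk k (c • a) (d • b) = (c * d) • mulAk k a b := by
  simp only [mulAk_eq, map_smul, LinearMap.smul_apply, smul_smul, mul_comm]

lemma mulAk_add_left (k : ℕ) (a a' b : (Fin (k - 1) → H) →₀ ℂ) :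
    mulAk k (a + a') b = mulAk k a b + mulAk k a' b := by
  simp only [mulAk_eq, map_add, LinearMap.add_apply]

lemma mulAk_add_right (k : ℕ) (a b b' : (Fin (k - 1) → H) →₀ ℂ) :
    mulAk k a (b + b') = mulAk k a b + mulAk k a b' := by
  simp only [mulAk_eq, map_add]

lemma mulAk_smul_left (k : ℕ) (c : ℂ) (a b : (Fin (k - 1) → H) →₀ ℂ) :
    mulAk k (c • a) b = c • mulAk k a b := by
  simp only [mulAk_eq, map_smul, LinearMap.smul_apply]

lemma mulAk_smul_right (k : ℕ) (c : ℂ) (a b : (Fin (k - 1) → H) →₀ ℂ) :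
    mulAk k a (c • b) = c • mulAk k a b := by
  simp only [mulAk_eq, map_smul]

lemma mulAk_zero_left (k : ℕ) (b : (Fin (k - 1) → H) →₀ ℂ) : mulAk k 0 b = 0 := by
  simp only [mulAk_eq, map_zero, LinearMap.zero_apply]

lemma mulAk_zero_right (k : ℕ) (a : (Fin (k - 1) → H) →₀ ℂ) : mulAk k a 0 = 0 := by
  simp only [mulAk_eq, map_zero]

end AuxBil

section Collapse

variable {N : Type*} [Group N] [Fintype N] [DecidableEq N]

/-- counting: the sum over tuples of a product of coordinate indicator constraints -/
lemma count_sum (k : ℕ) (hk : 3 ≤ k) :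
    (∑ b : Fin (k - 1) → N, ∏ i ∈ Finset.Icc 2 ((k + 1) / 2),
      (if idx1 k b i = 1 then (1 : ℂ) else 0)) =
    ((Fintype.card N ^ (k - (k + 1) / 2) : ℕ) : ℂ) := by
  set m := (k + 1) / 2 with hm
  have hm2 : 2 ≤ m := by omega
  have hmk : m ≤ k - 1 := by omega
  set T : Finset (Fin (k - 1)) :=
    univ.filter (fun j => 1 ≤ (j : ℕ) ∧ (j : ℕ) + 1 ≤ m) with hT
  have step1 : ∀ b : Fin (k - 1) → N,
      (∏ i ∈ Finset.Icc 2 m, (if idx1 k b i = 1 then (1 : ℂ) else 0)) =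
      ∏ j ∈ T, (if b j = 1 then (1 : ℂ) else 0) := by
    intro b
    refine Finset.prod_nbij' (fun a => (⟨(a - 1) % (k - 1), Nat.mod_lt _ (by omega)⟩ : Fin (k-1)))
      (fun j => (j : ℕ) + 1) ?_ ?_ ?_ ?_ ?_
    · intro a ha
      simp only [Finset.mem_Icc] at ha
      have : (a - 1) % (k - 1) = a - 1 := Nat.mod_eq_of_lt (by omega)
      simp only [hT, Finset.mem_filter, Finset.mem_univ, true_and, this]
      omega
    · intro j hj
      simp only [hT, Finset.mem_filter, Finset.mem_univ, true_and] at hj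
      simp only [Finset.mem_Icc]
      omega
    · intro a ha
      simp only [Finset.mem_Icc] at ha
      simp only [Nat.mod_eq_of_lt (show a - 1 < k - 1 by omega)]
      omega
    · intro j hj
      simp only [hT, Finset.mem_filter, Finset.mem_univ, true_and] at hj
      ext
      simp only [Nat.add_sub_cancel, Nat.mod_eq_of_lt j.isLt]
    · intro a ha
      simp only [Finset.mem_Icc] at ha
      rw [idx1_in k b a (by omega)]
      have hfin : (⟨a - 1, by omega⟩ : Fin (k - 1)) =
          (⟨(a - 1) % (k - 1), Nat.mod_lt _ (by omega)⟩ : Fin (k - 1)) := by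
        ext
        simp only [Nat.mod_eq_of_lt (show a - 1 < k - 1 by omega)]
      rw [hfin]
  rw [Finset.sum_congr rfl fun b _ => step1 b]
  have step2 : ∀ b : Fin (k - 1) → N,
      (∏ j ∈ T, (if b j = 1 then (1 : ℂ) else 0)) =
      ∏ j : Fin (k - 1), (if j ∈ T then (if b j = 1 then (1 : ℂ) else 0) else 1) := by
    intro b
    rw [Finset.prod_ite_mem, Finset.univ_inter]
  rw [Finset.sum_congr rfl fun b _ => step2 b]
  rw [← Fintype.prod_sum (fun j t => (if j ∈ T then (if t = 1 then (1 : ℂ) else 0) else 1))]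
  have step3 : ∀ j : Fin (k - 1),
      (∑ t : N, (if j ∈ T then (if t = 1 then (1 : ℂ) else 0) else 1)) =
      (if j ∈ T then (1 : ℂ) else (Fintype.card N : ℂ)) := by
    intro j
    by_cases hj : j ∈ T
    · simp [hj, Finset.sum_ite_eq' Finset.univ (1 : N) (fun _ => (1 : ℂ))]
    · simp [hj, Finset.card_univ]
  rw [Finset.prod_congr rfl fun j _ => step3 j]
  rw [Finset.prod_ite (fun _ => (1:ℂ)) (fun _ => (Fintype.card N : ℂ)),
    Finset.prod_const_one, one_mul, Finset.prod_const]
  have hTcard : T.card = m - 1 := by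
    rw [hT]
    rw [show m - 1 = (Finset.Ico 1 m).card by rw [Nat.card_Ico]]
    refine Finset.card_nbij' (fun j => (j : ℕ))
      (fun a => (⟨a % (k - 1), Nat.mod_lt _ (by omega)⟩ : Fin (k - 1))) ?_ ?_ ?_ ?_
    · intro a ha
      simp only [Finset.mem_coe, Finset.mem_filter, Finset.mem_univ, true_and] at ha
      simp only [Finset.mem_coe, Finset.mem_Ico]
      omega
    · intro a ha
      simp only [Finset.mem_coe, Finset.mem_Ico] at ha
      simp only [Finset.mem_coe, Finset.mem_filter, Finset.mem_univ, true_and,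
        Nat.mod_eq_of_lt (show a < k - 1 by omega)]
      omega
    · intro a ha
      ext
      simp only [Nat.mod_eq_of_lt a.isLt]
    · intro a ha
      simp only [Finset.mem_coe, Finset.mem_Ico] at ha
      simp only [Nat.mod_eq_of_lt (show a < k - 1 by omega)]
  have hfilT : (Finset.univ.filter (fun j : Fin (k-1) => j ∈ T)) = T := by
    ext j; simp
  have hcardfilter : (Finset.univ.filter (fun j : Fin (k-1) => ¬ (j ∈ T))).card
      = (k - 1) - (m - 1) := by
    rw [Finset.filter_not, Finset.card_sdiff_of_subset (Finset.filter_subset _ _)]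
    rw [Finset.card_univ, Fintype.card_fin, hfilT, hTcard]
  rw [hcardfilter]
  rw [show (k - 1) - (m - 1) = k - m by omega]
  push_cast
  ring

end Collapse

section Collapse2

variable {N : Type*} [Group N] [Fintype N] [DecidableEq N]

lemma collapse (k : ℕ) (hk : 3 ≤ k) {A : Type*} [AddCommMonoid A] [Module ℂ A]
    (F : (Fin (k - 1) → N) → A) :
    (∑ γ' : Fin (k - 1) → N, ∑ γ'' : Fin (k - 1) → N,
      (∏ i ∈ Finset.Icc 2 ((k + 1) / 2),
        (if idx1 k γ'' (k + 1 - i) = idx1 k γ' i then (1 : ℂ) else 0)) •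
      F (fun j => if (j : ℕ) + 1 ≤ (k + 1) / 2 then γ'' j else γ' j))
    = ((Fintype.card N ^ (k - (k + 1) / 2) : ℕ) : ℂ) • ∑ γ : Fin (k - 1) → N, F γ := by
  have hm2 : 2 ≤ (k + 1) / 2 := by omega
  have hmk : (k + 1) / 2 ≤ k - 1 := by omega
  set m := (k + 1) / 2 with hm
  rw [Finset.sum_comm]
  have E1 : ∀ γ'' : Fin (k - 1) → N,
      (∑ γ' : Fin (k - 1) → N,
        (∏ i ∈ Finset.Icc 2 m,
          (if idx1 k γ'' (k + 1 - i) = idx1 k γ' i then (1 : ℂ) else 0)) •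
        F (fun j => if (j : ℕ) + 1 ≤ m then γ'' j else γ' j)) =
      ∑ β : Fin (k - 1) → N,
        (∏ i ∈ Finset.Icc 2 m, (if idx1 k β i = 1 then (1 : ℂ) else 0)) •
        F (fun j => if (j : ℕ) + 1 ≤ m then γ'' j else β j) := by
    intro γ''
    set c : Fin (k - 1) → N := fun j =>
      if h : 1 ≤ (j : ℕ) ∧ (j : ℕ) + 1 ≤ m then γ'' ⟨k - 1 - (j : ℕ), by omega⟩ else 1 with hcdef
    set e : (Fin (k - 1) → N) ≃ (Fin (k - 1) → N) :=
      Equiv.piCongrRight (fun j => Equiv.mulLeft (c j)) with he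
    refine (Fintype.sum_equiv e _ _ fun β => ?_).symm
    have heb : ∀ j, e β j = c j * β j := fun j => rfl
    congr 1
    · refine Finset.prod_congr rfl fun i hi => ?_
      rw [Finset.mem_Icc] at hi
      obtain ⟨hi2, him⟩ := hi
      have h1 : i - 1 < k - 1 := by omega
      have h2 : (k + 1 - i) - 1 < k - 1 := by omega
      rw [idx1_in k β i h1, idx1_in k γ'' (k + 1 - i) h2, idx1_in k (e β) i h1, heb]
      have hci : c ⟨i - 1, h1⟩ = γ'' ⟨k - 1 - (i - 1), by omega⟩ := by
        rw [hcdef]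
        exact dif_pos ⟨by show 1 ≤ i - 1; omega, by show i - 1 + 1 ≤ m; omega⟩
      rw [hci]
      have hfin : (⟨k + 1 - i - 1, h2⟩ : Fin (k - 1)) =
          (⟨k - 1 - (i - 1), by omega⟩ : Fin (k - 1)) := by
        simp only [Fin.mk.injEq]; omega
      rw [hfin]
      simp only [left_eq_mul]
    · congr 1
      funext j
      by_cases hj : (j : ℕ) + 1 ≤ m
      · simp only [hj, if_true]
      · simp only [hj, if_false, heb]
        have : c j = 1 := by rw [hcdef]; exact dif_neg fun hcon => hj hcon.2
        rw [this, one_mul]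
  rw [Finset.sum_congr rfl fun γ'' _ => E1 γ'']
  set sw : (Fin (k - 1) → N) → (Fin (k - 1) → N) → (Fin (k - 1) → N) :=
    fun a b j => if (j : ℕ) + 1 ≤ m then a j else b j with hswdef
  have swinv : ∀ a b : Fin (k - 1) → N, sw (sw a b) (sw b a) = a := by
    intro a b; funext j
    by_cases hj : (j : ℕ) < m <;> simp [hswdef, hj]
  set e2 : ((Fin (k - 1) → N) × (Fin (k - 1) → N)) ≃
      ((Fin (k - 1) → N) × (Fin (k - 1) → N)) :=
    ⟨fun p => (sw p.1 p.2, sw p.2 p.1), fun p => (sw p.1 p.2, sw p.2 p.1),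
      fun p => by simp [swinv], fun p => by simp [swinv]⟩ with he2
  have step : (∑ γ'' : Fin (k - 1) → N, ∑ β : Fin (k - 1) → N,
        (∏ i ∈ Finset.Icc 2 m, (if idx1 k β i = 1 then (1 : ℂ) else 0)) •
        F (fun j => if (j : ℕ) + 1 ≤ m then γ'' j else β j)) =
      ∑ q : ((Fin (k - 1) → N) × (Fin (k - 1) → N)),
        (∏ i ∈ Finset.Icc 2 m, (if idx1 k q.2 i = 1 then (1 : ℂ) else 0)) • F q.1 := by
    rw [← Fintype.sum_prod_type
      (f := fun p : ((Fin (k - 1) → N) × (Fin (k - 1) → N)) =>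
        (∏ i ∈ Finset.Icc 2 m, (if idx1 k p.2 i = 1 then (1 : ℂ) else 0)) •
        F (fun j => if (j : ℕ) + 1 ≤ m then p.1 j else p.2 j))]
    refine Fintype.sum_equiv e2 _ _ fun p => ?_
    have h1 : (e2 p).1 = sw p.1 p.2 := rfl
    have h2 : (e2 p).2 = sw p.2 p.1 := rfl
    rw [h1, h2]
    congr 1
    refine Finset.prod_congr rfl fun i hi => ?_
    rw [Finset.mem_Icc] at hi
    obtain ⟨hi2, him⟩ := hi
    have hh : i - 1 < k - 1 := by omega
    rw [idx1_in k p.2 i hh, idx1_in k (sw p.2 p.1) i hh]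
    have : sw p.2 p.1 ⟨i - 1, hh⟩ = p.2 ⟨i - 1, hh⟩ := by
      rw [hswdef]
      exact if_pos (by show i - 1 + 1 ≤ m; omega)
    rw [this]
  rw [step, Fintype.sum_prod_type]
  have last : ∀ a : Fin (k - 1) → N,
      (∑ b : Fin (k - 1) → N,
        (∏ i ∈ Finset.Icc 2 m, (if idx1 k b i = 1 then (1 : ℂ) else 0)) • F a) =
      ((Fintype.card N ^ (k - m) : ℕ) : ℂ) • F a := by
    intro a
    rw [← Finset.sum_smul, count_sum k hk]
  rw [Finset.sum_congr rfl fun a _ => last a, ← Finset.smul_sum]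

end Collapse2

variable {G Θ : Type*} [Group G] [Fintype G] [DecidableEq G]
  [Group Θ] [Fintype Θ] [DecidableEq Θ] (φ : Θ →* MulAut G)

/-- The underlying equivalence `G ⋊[φ] Θ ≃ G × Θ`. -/
def sdpEquivProd : (G ⋊[φ] Θ) ≃ G × Θ where
  toFun s := (s.left, s.right)
  invFun p := ⟨p.1, p.2⟩
  left_inv _ := rfl
  right_inv _ := rfl

instance : Fintype (G ⋊[φ] Θ) := Fintype.ofEquiv (G × Θ) (sdpEquivProd φ).symm

instance : DecidableEq (G ⋊[φ] Θ) := (sdpEquivProd φ).decidableEq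

/-- `U(ḡ) = Σ_{θ∈Θ} Σ_{γ̄∈Θ^{k−1}} S((θ(g₁),γ₁),…,(θ(g_{k−1}),γ_{k−1})) ∈ A_k(G⋊Θ)`. -/
def Uel (k : ℕ) (g : Fin (k - 1) → G) : (Fin (k - 1) → G ⋊[φ] Θ) →₀ ℂ :=
  ∑ θ : Θ, ∑ γ : Fin (k - 1) → Θ,
    Finsupp.single (fun j => (⟨φ θ (g j), γ j⟩ : G ⋊[φ] Θ)) (1 : ℂ)


section MainLemmas

/-- coefficient of `basisMul k (τ·g) h` in `A_k(G)` -/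
def Ccoef (k : ℕ) (g h : Fin (k - 1) → G) (τ : Θ) : ℂ :=
  (((Fintype.card G : ℝ) ^ (((((k + 1) / 2 : ℕ) : ℝ) - 1) / 2) : ℝ) : ℂ) *
    ∏ i ∈ Finset.Icc 2 ((k + 1) / 2),
      (if idx1 k h 1 * φ τ (idx1 k g (k + 1 - i)) = idx1 k h i then (1 : ℂ) else 0)

/-- resulting tuple of `basisMul k (τ·g) h` -/
def Zt (k : ℕ) (g h : Fin (k - 1) → G) (τ : Θ) : Fin (k - 1) → G :=
  fun j => if (j : ℕ) + 1 ≤ (k + 1) / 2 then idx1 k h 1 * φ τ (g j) else h j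

lemma basisMul_act_left (k : ℕ) (g h : Fin (k - 1) → G) (τ : Θ) :
    basisMul k (fun j => φ τ (g j)) h = Ccoef φ k g h τ • Finsupp.single (Zt φ k g h τ) 1 := by
  unfold basisMul Ccoef Zt
  congr 2
  refine Finset.prod_congr rfl fun i _ => ?_
  rw [idx1_map (φ τ) (map_one _)]

lemma basisMul_equivariant (k : ℕ) (σ : Θ) (x y : Fin (k - 1) → G) :
    basisMul k (fun j => φ σ (x j)) (fun j => φ σ (y j)) =
      Finsupp.mapDomain (fun (v : Fin (k - 1) → G) (j : Fin (k - 1)) => φ σ (v j))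
        (basisMul k x y) := by
  rw [basisMul, basisMul, Finsupp.mapDomain_smul, Finsupp.mapDomain_single]
  congr 2
  · refine Finset.prod_congr rfl fun i _ => ?_
    rw [idx1_map (φ σ) (map_one _), idx1_map (φ σ) (map_one _), idx1_map (φ σ) (map_one _)]
    have hiff : ((φ σ) (idx1 k y 1) * (φ σ) (idx1 k x (k + 1 - i)) = (φ σ) (idx1 k y i)) ↔
        (idx1 k y 1 * idx1 k x (k + 1 - i) = idx1 k y i) := by
      rw [← map_mul]; exact (φ σ).injective.eq_iff
    simp only [hiff]
  · funext j
    by_cases hj : (j : ℕ) + 1 ≤ (k + 1) / 2 <;>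
      simp [hj, idx1_map (φ σ) (map_one _), map_mul]

lemma sum_basisMul_acts (k : ℕ) (g h : Fin (k - 1) → G) :
    (∑ θ : Θ, ∑ θ' : Θ, basisMul k (fun j => φ θ (g j)) (fun j => φ θ' (h j))) =
      ∑ τ : Θ, Ccoef φ k g h τ • thetaS φ k (Zt φ k g h τ) := by
  rw [Finset.sum_comm]
  have h1 : ∀ θ' : Θ, (∑ θ : Θ, basisMul k (fun j => φ θ (g j)) (fun j => φ θ' (h j))) =
      ∑ τ : Θ, Ccoef φ k g h τ •
        Finsupp.single (fun j => φ θ' (Zt φ k g h τ j)) (1 : ℂ) := by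
    intro θ'
    rw [← Equiv.sum_comp (Equiv.mulLeft θ') (fun θ => basisMul k
      (fun j => φ θ (g j)) (fun j => φ θ' (h j)))]
    refine Finset.sum_congr rfl fun τ _ => ?_
    have e1 : (fun j => φ ((Equiv.mulLeft θ') τ) (g j)) = fun j => φ θ' (φ τ (g j)) := by
      funext j; simp [map_mul]
    rw [e1]
    have := basisMul_equivariant φ k θ' (fun j => φ τ (g j)) h
    rw [this, basisMul_act_left, Finsupp.mapDomain_smul, Finsupp.mapDomain_single]
  rw [Finset.sum_congr rfl fun θ' _ => h1 θ', Finset.sum_comm]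
  refine Finset.sum_congr rfl fun τ _ => ?_
  rw [thetaS, Finset.smul_sum]

/-- KEY1 -/
lemma key1 (k : ℕ) (g h : Fin (k - 1) → G) :
    mulAk k (thetaS φ k g) (thetaS φ k h) =
      ∑ τ : Θ, Ccoef φ k g h τ • thetaS φ k (Zt φ k g h τ) := by
  rw [thetaS, thetaS, mulAk_sum_sum]
  rw [← sum_basisMul_acts φ k g h]
  refine Finset.sum_congr rfl fun θ _ => Finset.sum_congr rfl fun θ' _ => ?_
  exact mulAk_single_single k _ _

lemma idx1_pair (k : ℕ) (u : Fin (k - 1) → G) (w : Fin (k - 1) → Θ) (i : ℕ) :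
    idx1 k (fun j => (⟨u j, w j⟩ : G ⋊[φ] Θ)) i =
      (⟨idx1 k u i, idx1 k w i⟩ : G ⋊[φ] Θ) := by
  unfold idx1; split <;> rfl

lemma card_sdp : Fintype.card (G ⋊[φ] Θ) = Fintype.card G * Fintype.card Θ := by
  rw [Fintype.card_congr (sdpEquivProd φ), Fintype.card_prod]

lemma Uel_inv (k : ℕ) (g : Fin (k - 1) → G) (θ : Θ) :
    Uel φ k (fun j => φ θ (g j)) = Uel φ k g := by
  rw [Uel, Uel]
  refine Fintype.sum_equiv (Equiv.mulRight θ) _ _ fun θ' => ?_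
  refine Finset.sum_congr rfl fun γ _ => ?_
  congr 1
  funext j
  congr 1
  show φ θ' (φ θ (g j)) = φ ((Equiv.mulRight θ) θ' ) (g j)
  simp [map_mul]

/-- the constant `|Θ|^{−⌊k/2⌋}·|Θ|^{(1−⌈k/2⌉)/2}` -/
def c0c (k : ℕ) : ℂ :=
  (((Fintype.card Θ : ℝ) ^ (-((k / 2 : ℕ) : ℝ)) *
    (Fintype.card Θ : ℝ) ^ ((1 - (((k + 1) / 2 : ℕ) : ℝ)) / 2) : ℝ) : ℂ)

/-- the global linear map extending `Φ_k` -/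
def Lmap (k : ℕ) : ((Fin (k - 1) → G) →₀ ℂ) →ₗ[ℂ] ((Fin (k - 1) → G ⋊[φ] Θ) →₀ ℂ) :=
  Finsupp.lsum ℂ fun x => LinearMap.toSpanSingleton ℂ _
    ((c0c (Θ := Θ) k * (Fintype.card Θ : ℂ)⁻¹) • Uel φ k x)

lemma Lmap_single (k : ℕ) (x : Fin (k - 1) → G) :
    Lmap φ k (Finsupp.single x 1) =
      (c0c (Θ := Θ) k * (Fintype.card Θ : ℂ)⁻¹) • Uel φ k x := by
  rw [Lmap, Finsupp.lsum_single, LinearMap.toSpanSingleton_apply, one_smul]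

lemma Lmap_thetaS (k : ℕ) (g : Fin (k - 1) → G) :
    Lmap φ k (thetaS φ k g) = c0c (Θ := Θ) k • Uel φ k g := by
  rw [thetaS, map_sum]
  have h1 : ∀ θ : Θ, Lmap φ k (Finsupp.single (fun j => φ θ (g j)) (1:ℂ)) =
      (c0c (Θ := Θ) k * (Fintype.card Θ : ℂ)⁻¹) • Uel φ k g := by
    intro θ
    rw [Lmap_single, Uel_inv]
  rw [Finset.sum_congr rfl fun θ _ => h1 θ, Finset.sum_const, Finset.card_univ]
  rw [← Nat.cast_smul_eq_nsmul ℂ, smul_smul]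
  congr 1
  have hne : (Fintype.card Θ : ℂ) ≠ 0 := Nat.cast_ne_zero.mpr Fintype.card_ne_zero
  field_simp

lemma key_pointwise (k : ℕ) (hk : 3 ≤ k) (g h : Fin (k - 1) → G) (θ' τ : Θ)
    (γ' γ'' : Fin (k - 1) → Θ) :
    basisMul k
      (fun j => (⟨φ ((idx1 k γ' 1)⁻¹ * (θ' * τ)) (g j), (idx1 k γ' 1)⁻¹ * γ'' j⟩ : G ⋊[φ] Θ))
      (fun j => (⟨φ θ' (h j), γ' j⟩ : G ⋊[φ] Θ)) =
    (∏ i ∈ Finset.Icc 2 ((k + 1) / 2),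
        (if idx1 k γ'' (k + 1 - i) = idx1 k γ' i then (1 : ℂ) else 0)) •
    (((((Fintype.card (G ⋊[φ] Θ) : ℝ) ^ (((((k + 1) / 2 : ℕ) : ℝ) - 1) / 2) : ℝ) : ℂ) *
        ∏ i ∈ Finset.Icc 2 ((k + 1) / 2),
          (if idx1 k h 1 * φ τ (idx1 k g (k + 1 - i)) = idx1 k h i then (1 : ℂ) else 0)) •
      Finsupp.single
        (fun j : Fin (k - 1) =>
          (⟨φ θ' (Zt φ k g h τ j),
            if (j : ℕ) + 1 ≤ (k + 1) / 2 then γ'' j else γ' j⟩ : G ⋊[φ] Θ)) (1 : ℂ)) := by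
  have hm2 : 2 ≤ (k + 1) / 2 := by omega
  have hmk : (k + 1) / 2 ≤ k - 1 := by omega
  have hcomp : ∀ x : G,
      φ (idx1 k γ' 1) (φ ((idx1 k γ' 1)⁻¹ * (θ' * τ)) x) = φ θ' (φ τ x) := by
    intro x
    rw [← MulAut.mul_apply, ← map_mul, mul_inv_cancel_left, map_mul, MulAut.mul_apply]
  rw [basisMul, smul_smul]
  congr 1
  · -- scalars
    have hsplit : ∀ i ∈ Finset.Icc 2 ((k + 1) / 2),
        (if (⟨idx1 k (fun j => φ θ' (h j)) 1, idx1 k γ' 1⟩ : G ⋊[φ] Θ) *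
            (⟨idx1 k (fun j => φ ((idx1 k γ' 1)⁻¹ * (θ' * τ)) (g j)) (k + 1 - i),
              idx1 k (fun j => (idx1 k γ' 1)⁻¹ * γ'' j) (k + 1 - i)⟩ : G ⋊[φ] Θ) =
            (⟨idx1 k (fun j => φ θ' (h j)) i, idx1 k γ' i⟩ : G ⋊[φ] Θ) then (1:ℂ) else 0) =
        (if idx1 k h 1 * φ τ (idx1 k g (k + 1 - i)) = idx1 k h i then (1:ℂ) else 0) *
        (if idx1 k γ'' (k + 1 - i) = idx1 k γ' i then (1:ℂ) else 0) := by
      intro i hi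
      rw [Finset.mem_Icc] at hi
      obtain ⟨hi2, him⟩ := hi
      have h2 : (k + 1 - i) - 1 < k - 1 := by omega
      rw [idx1_map (φ θ') (map_one _), idx1_map (φ θ') (map_one _),
        idx1_map (φ ((idx1 k γ' 1)⁻¹ * (θ' * τ))) (map_one _)]
      rw [idx1_in k (fun j => (idx1 k γ' 1)⁻¹ * γ'' j) (k + 1 - i) h2,
        idx1_in k γ'' (k + 1 - i) h2]
      have hcond : ((⟨φ θ' (idx1 k h 1), idx1 k γ' 1⟩ : G ⋊[φ] Θ) *
          (⟨φ ((idx1 k γ' 1)⁻¹ * (θ' * τ)) (idx1 k g (k + 1 - i)),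
            (idx1 k γ' 1)⁻¹ * γ'' ⟨k + 1 - i - 1, h2⟩⟩ : G ⋊[φ] Θ) =
            (⟨φ θ' (idx1 k h i), idx1 k γ' i⟩ : G ⋊[φ] Θ)) ↔
          ((idx1 k h 1 * φ τ (idx1 k g (k + 1 - i)) = idx1 k h i) ∧
            (γ'' ⟨k + 1 - i - 1, h2⟩ = idx1 k γ' i)) := by
        rw [SemidirectProduct.ext_iff]
        simp only [SemidirectProduct.mul_left, SemidirectProduct.mul_right]
        rw [hcomp]
        constructor
        · rintro ⟨ha, hb⟩
          constructor
          · apply (φ θ').injective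
            rw [map_mul]
            exact ha
          · rw [← hb, mul_inv_cancel_left]
        · rintro ⟨ha, hb⟩
          constructor
          · rw [← map_mul, ha]
          · rw [mul_inv_cancel_left, hb]
      simp only [hcond]
      rw [ite_and_mul_cpx]
    simp only [idx1_pair φ]
    rw [Finset.prod_congr rfl hsplit, Finset.prod_mul_distrib]
    ring
  · -- tuple
    congr 1
    funext j
    by_cases hj : (j : ℕ) + 1 ≤ (k + 1) / 2
    · simp only [hj, if_true]
      rw [idx1_pair φ, idx1_map (φ θ') (map_one _)]
      ext
      · simp only [SemidirectProduct.mul_left]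
        rw [hcomp]
        rw [Zt]
        simp only [hj, if_true, map_mul]
      · simp only [SemidirectProduct.mul_right]
        rw [mul_inv_cancel_left]
    · simp only [hj, if_false]
      congr 1
      rw [Zt]
      simp only [hj, if_false]

lemma const_id (k : ℕ) (hk : 3 ≤ k) :
    (((Fintype.card G : ℝ) ^ (((((k + 1) / 2 : ℕ) : ℝ) - 1) / 2) : ℝ) : ℂ) =
      c0c (Θ := Θ) k * ((Fintype.card Θ ^ (k - (k + 1) / 2) : ℕ) : ℂ) *
        (((Fintype.card (G ⋊[φ] Θ) : ℝ) ^ (((((k + 1) / 2 : ℕ) : ℝ) - 1) / 2) : ℝ) : ℂ) := by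
  rw [card_sdp]
  have hΘ : (0 : ℝ) < (Fintype.card Θ : ℝ) := by
    exact_mod_cast Fintype.card_pos
  have hG : (0 : ℝ) ≤ (Fintype.card G : ℝ) := by positivity
  rw [c0c]
  rw [show ((Fintype.card Θ ^ (k - (k + 1) / 2) : ℕ) : ℂ) =
    ((((Fintype.card Θ : ℝ) ^ ((k - (k + 1) / 2 : ℕ) : ℕ) : ℝ)) : ℂ) by push_cast; ring]
  rw [← Complex.ofReal_mul, ← Complex.ofReal_mul]
  congr 1
  have hmulcast : ((Fintype.card G * Fintype.card Θ : ℕ) : ℝ) =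
      (Fintype.card G : ℝ) * (Fintype.card Θ : ℝ) := by push_cast; ring
  rw [hmulcast, Real.mul_rpow hG hΘ.le]
  rw [← Real.rpow_natCast (Fintype.card Θ : ℝ) (k - (k + 1) / 2)]
  rw [show (((k + 1) / 2 : ℕ) : ℝ) - 1 = (((k + 1) / 2 : ℕ) : ℝ) - 1 from rfl]
  have hexp : (Fintype.card Θ : ℝ) ^ (-((k / 2 : ℕ) : ℝ)) *
      (Fintype.card Θ : ℝ) ^ ((1 - (((k + 1) / 2 : ℕ) : ℝ)) / 2) *
      (Fintype.card Θ : ℝ) ^ (((k - (k + 1) / 2 : ℕ) : ℕ) : ℝ) *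
      (Fintype.card Θ : ℝ) ^ (((((k + 1) / 2 : ℕ) : ℝ) - 1) / 2) = 1 := by
    rw [← Real.rpow_add hΘ, ← Real.rpow_add hΘ, ← Real.rpow_add hΘ]
    rw [show (-((k / 2 : ℕ) : ℝ) + (1 - (((k + 1) / 2 : ℕ) : ℝ)) / 2 +
        (((k - (k + 1) / 2 : ℕ) : ℕ) : ℝ) + ((((k + 1) / 2 : ℕ) : ℝ) - 1) / 2) = 0 by
      have h1 : ((k - (k + 1) / 2 : ℕ) : ℝ) = ((k / 2 : ℕ) : ℝ) := by
        congr 1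
        omega
      rw [h1]
      ring]
    exact Real.rpow_zero _
  calc (Fintype.card G : ℝ) ^ (((((k + 1) / 2 : ℕ) : ℝ) - 1) / 2)
      = (Fintype.card G : ℝ) ^ (((((k + 1) / 2 : ℕ) : ℝ) - 1) / 2) *
        ((Fintype.card Θ : ℝ) ^ (-((k / 2 : ℕ) : ℝ)) *
        (Fintype.card Θ : ℝ) ^ ((1 - (((k + 1) / 2 : ℕ) : ℝ)) / 2) *
        (Fintype.card Θ : ℝ) ^ (((k - (k + 1) / 2 : ℕ) : ℕ) : ℝ) *
        (Fintype.card Θ : ℝ) ^ (((((k + 1) / 2 : ℕ) : ℝ) - 1) / 2)) := by rw [hexp, mul_one]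
    _ = (Fintype.card Θ : ℝ) ^ (-((k / 2 : ℕ) : ℝ)) *
        (Fintype.card Θ : ℝ) ^ ((1 - (((k + 1) / 2 : ℕ) : ℝ)) / 2) *
        (Fintype.card Θ : ℝ) ^ (((k - (k + 1) / 2 : ℕ) : ℕ) : ℝ) *
        ((Fintype.card G : ℝ) ^ (((((k + 1) / 2 : ℕ) : ℝ) - 1) / 2) *
         (Fintype.card Θ : ℝ) ^ (((((k + 1) / 2 : ℕ) : ℝ) - 1) / 2)) := by ring

/-- KEY2 -/
lemma key2 (k : ℕ) (hk : 3 ≤ k) (g h : Fin (k - 1) → G) :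
    (∑ τ : Θ, Ccoef φ k g h τ • Uel φ k (Zt φ k g h τ)) =
      c0c (Θ := Θ) k • mulAk k (Uel φ k g) (Uel φ k h) := by
  -- expand the product of the two `Uel`s
  rw [Uel, Uel, mulAk_sum_sum]
  have step1 : ∀ θ θ' : Θ,
      mulAk k (∑ γ : Fin (k - 1) → Θ,
          Finsupp.single (fun j => (⟨φ θ (g j), γ j⟩ : G ⋊[φ] Θ)) (1 : ℂ))
        (∑ γ' : Fin (k - 1) → Θ,
          Finsupp.single (fun j => (⟨φ θ' (h j), γ' j⟩ : G ⋊[φ] Θ)) (1 : ℂ)) =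
      ∑ γ : Fin (k - 1) → Θ, ∑ γ' : Fin (k - 1) → Θ,
        basisMul k (fun j => (⟨φ θ (g j), γ j⟩ : G ⋊[φ] Θ))
          (fun j => (⟨φ θ' (h j), γ' j⟩ : G ⋊[φ] Θ)) := by
    intro θ θ'
    rw [mulAk_sum_sum]
    exact Finset.sum_congr rfl fun γ _ => Finset.sum_congr rfl fun γ' _ =>
      mulAk_single_single k _ _
  rw [Finset.sum_congr rfl fun θ _ => Finset.sum_congr rfl fun θ' _ => step1 θ θ']
  -- reorder sums: θ, θ', γ, γ'  →  θ', γ', τ, γ''  and reindex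
  have step2 : (∑ θ : Θ, ∑ θ' : Θ, ∑ γ : Fin (k - 1) → Θ, ∑ γ' : Fin (k - 1) → Θ,
        basisMul k (fun j => (⟨φ θ (g j), γ j⟩ : G ⋊[φ] Θ))
          (fun j => (⟨φ θ' (h j), γ' j⟩ : G ⋊[φ] Θ))) =
      ∑ θ' : Θ, ∑ γ' : Fin (k - 1) → Θ, ∑ θ : Θ, ∑ γ : Fin (k - 1) → Θ,
        basisMul k (fun j => (⟨φ θ (g j), γ j⟩ : G ⋊[φ] Θ))
          (fun j => (⟨φ θ' (h j), γ' j⟩ : G ⋊[φ] Θ)) := by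
    rw [Finset.sum_comm]
    refine Finset.sum_congr rfl fun θ' _ => ?_
    exact (Finset.sum_congr rfl fun θ _ => Finset.sum_comm).trans Finset.sum_comm
  rw [step2]
  -- reindex the inner double sum and apply the pointwise identity
  have step3 : ∀ θ' : Θ, ∀ γ' : Fin (k - 1) → Θ,
      (∑ θ : Θ, ∑ γ : Fin (k - 1) → Θ,
        basisMul k (fun j => (⟨φ θ (g j), γ j⟩ : G ⋊[φ] Θ))
          (fun j => (⟨φ θ' (h j), γ' j⟩ : G ⋊[φ] Θ))) =
      ∑ τ : Θ, ∑ γ'' : Fin (k - 1) → Θ,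
        (∏ i ∈ Finset.Icc 2 ((k + 1) / 2),
            (if idx1 k γ'' (k + 1 - i) = idx1 k γ' i then (1 : ℂ) else 0)) •
        (((((Fintype.card (G ⋊[φ] Θ) : ℝ) ^ (((((k + 1) / 2 : ℕ) : ℝ) - 1) / 2) : ℝ) : ℂ) *
            ∏ i ∈ Finset.Icc 2 ((k + 1) / 2),
              (if idx1 k h 1 * φ τ (idx1 k g (k + 1 - i)) = idx1 k h i then (1 : ℂ) else 0)) •
          Finsupp.single
            (fun j : Fin (k - 1) =>
              (⟨φ θ' (Zt φ k g h τ j),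
                if (j : ℕ) + 1 ≤ (k + 1) / 2 then γ'' j else γ' j⟩ : G ⋊[φ] Θ)) (1 : ℂ)) := by
    intro θ' γ'
    refine (Fintype.sum_equiv
      ((Equiv.mulLeft θ').trans (Equiv.mulLeft (idx1 k γ' 1)⁻¹)) _ _ fun τ => ?_).symm
    refine Fintype.sum_equiv
      (Equiv.piCongrRight fun _ : Fin (k - 1) => Equiv.mulLeft (idx1 k γ' 1)⁻¹)
      _ _ fun γ'' => ?_
    have he : ((Equiv.mulLeft θ').trans (Equiv.mulLeft (idx1 k γ' 1)⁻¹)) τ =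
        (idx1 k γ' 1)⁻¹ * (θ' * τ) := rfl
    have he' : ((Equiv.piCongrRight fun _ : Fin (k - 1) =>
        Equiv.mulLeft (idx1 k γ' 1)⁻¹) γ'') = fun j => (idx1 k γ' 1)⁻¹ * γ'' j := rfl
    rw [he, he']
    exact (key_pointwise φ k hk g h θ' τ γ' γ'').symm
  rw [Finset.sum_congr rfl fun θ' _ => Finset.sum_congr rfl fun γ' _ => step3 θ' γ']
  -- swap γ' and τ
  have step4 : ∀ θ' : Θ,
      (∑ γ' : Fin (k - 1) → Θ, ∑ τ : Θ, ∑ γ'' : Fin (k - 1) → Θ,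
        (∏ i ∈ Finset.Icc 2 ((k + 1) / 2),
            (if idx1 k γ'' (k + 1 - i) = idx1 k γ' i then (1 : ℂ) else 0)) •
        (((((Fintype.card (G ⋊[φ] Θ) : ℝ) ^ (((((k + 1) / 2 : ℕ) : ℝ) - 1) / 2) : ℝ) : ℂ) *
            ∏ i ∈ Finset.Icc 2 ((k + 1) / 2),
              (if idx1 k h 1 * φ τ (idx1 k g (k + 1 - i)) = idx1 k h i then (1 : ℂ) else 0)) •
          Finsupp.single
            (fun j : Fin (k - 1) =>
              (⟨φ θ' (Zt φ k g h τ j),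
                if (j : ℕ) + 1 ≤ (k + 1) / 2 then γ'' j else γ' j⟩ : G ⋊[φ] Θ)) (1 : ℂ))) =
      ∑ τ : Θ,
        ((Fintype.card Θ ^ (k - (k + 1) / 2) : ℕ) : ℂ) •
        ∑ γ : Fin (k - 1) → Θ,
          (((((Fintype.card (G ⋊[φ] Θ) : ℝ) ^ (((((k + 1) / 2 : ℕ) : ℝ) - 1) / 2) : ℝ) : ℂ) *
              ∏ i ∈ Finset.Icc 2 ((k + 1) / 2),
                (if idx1 k h 1 * φ τ (idx1 k g (k + 1 - i)) = idx1 k h i then (1 : ℂ) else 0)) •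
            Finsupp.single
              (fun j : Fin (k - 1) =>
                (⟨φ θ' (Zt φ k g h τ j), γ j⟩ : G ⋊[φ] Θ)) (1 : ℂ)) := by
    intro θ'
    rw [Finset.sum_comm]
    refine Finset.sum_congr rfl fun τ _ => ?_
    exact collapse k hk
      (F := fun sp =>
        (((((Fintype.card (G ⋊[φ] Θ) : ℝ) ^ (((((k + 1) / 2 : ℕ) : ℝ) - 1) / 2) : ℝ) : ℂ) *
            ∏ i ∈ Finset.Icc 2 ((k + 1) / 2),
              (if idx1 k h 1 * φ τ (idx1 k g (k + 1 - i)) = idx1 k h i then (1 : ℂ) else 0)) •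
          Finsupp.single
            (fun j : Fin (k - 1) =>
              (⟨φ θ' (Zt φ k g h τ j), sp j⟩ : G ⋊[φ] Θ)) (1 : ℂ)))
  rw [Finset.sum_congr rfl fun θ' _ => step4 θ']
  -- compare with the left-hand side
  have lhsexp : ∀ τ : Θ, Ccoef φ k g h τ • Uel φ k (Zt φ k g h τ) =
      ∑ θ' : Θ, ∑ γ : Fin (k - 1) → Θ,
        Ccoef φ k g h τ •
          Finsupp.single
            (fun j : Fin (k - 1) => (⟨φ θ' (Zt φ k g h τ j), γ j⟩ : G ⋊[φ] Θ)) (1 : ℂ) := by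
    intro τ
    rw [Uel, Finset.smul_sum]
    exact Finset.sum_congr rfl fun θ' _ => by rw [Finset.smul_sum]
  rw [Finset.sum_congr rfl fun τ _ => lhsexp τ]
  rw [Finset.smul_sum, Finset.sum_comm]
  refine Finset.sum_congr rfl fun θ' _ => ?_
  rw [Finset.smul_sum]
  refine Finset.sum_congr rfl fun τ _ => ?_
  rw [Finset.smul_sum, Finset.smul_sum]
  refine Finset.sum_congr rfl fun γ _ => ?_
  rw [smul_smul, smul_smul]
  congr 1
  rw [Ccoef, const_id φ k hk]
  ring

/-- multiplicativity of `Lmap` on products of generators -/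
lemma Lmul_gen (k : ℕ) (hk : 3 ≤ k) (g h : Fin (k - 1) → G) :
    Lmap φ k (mulAk k (thetaS φ k g) (thetaS φ k h)) =
      mulAk k (Lmap φ k (thetaS φ k g)) (Lmap φ k (thetaS φ k h)) := by
  rw [key1, map_sum, Lmap_thetaS, Lmap_thetaS, mulAk_smul_smul]
  have h1 : ∀ τ : Θ, Lmap φ k (Ccoef φ k g h τ • thetaS φ k (Zt φ k g h τ)) =
      Ccoef φ k g h τ • (c0c (Θ := Θ) k • Uel φ k (Zt φ k g h τ)) := by
    intro τ
    rw [map_smul, Lmap_thetaS]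
  rw [Finset.sum_congr rfl fun τ _ => h1 τ]
  have h2 : (∑ τ : Θ, Ccoef φ k g h τ • (c0c (Θ := Θ) k • Uel φ k (Zt φ k g h τ))) =
      c0c (Θ := Θ) k • ∑ τ : Θ, Ccoef φ k g h τ • Uel φ k (Zt φ k g h τ) := by
    rw [Finset.smul_sum]
    exact Finset.sum_congr rfl fun τ _ => smul_comm _ _ _
  rw [h2, key2 φ k hk, smul_smul]

end MainLemmas

/-- **Theorem 4.10 / Definition 4.9 of the paper (multiplicative part)**: the span of
the `ΘS(ḡ)` in `A_k(G)` is closed under the product, there is a unique `ℂ`-linear map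
`Φ_k` on this span with `Φ_k(ΘS(ḡ)) = |Θ|^{−⌊k/2⌋}·|Θ|^{(1−⌈k/2⌉)/2}·U(ḡ)`, and this
`Φ_k` is multiplicative. -/
theorem phi_k_exists_unique_multiplicative (k : ℕ) (hk : 3 ≤ k) :
    (∀ x ∈ Submodule.span ℂ (Set.range (thetaS φ k)),
      ∀ y ∈ Submodule.span ℂ (Set.range (thetaS φ k)),
        mulAk k x y ∈ Submodule.span ℂ (Set.range (thetaS φ k))) ∧
    ∃ Φ : (Submodule.span ℂ (Set.range (thetaS φ k))) →ₗ[ℂ]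
        ((Fin (k - 1) → G ⋊[φ] Θ) →₀ ℂ),
      (∀ g : Fin (k - 1) → G,
        Φ ⟨thetaS φ k g, Submodule.subset_span (Set.mem_range_self g)⟩ =
          (((Fintype.card Θ : ℝ) ^ (-((k / 2 : ℕ) : ℝ)) *
            (Fintype.card Θ : ℝ) ^ ((1 - (((k + 1) / 2 : ℕ) : ℝ)) / 2) : ℝ) : ℂ) •
            Uel φ k g) ∧
      (∀ Φ' : (Submodule.span ℂ (Set.range (thetaS φ k))) →ₗ[ℂ]
          ((Fin (k - 1) → G ⋊[φ] Θ) →₀ ℂ),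
        (∀ g : Fin (k - 1) → G,
          Φ' ⟨thetaS φ k g, Submodule.subset_span (Set.mem_range_self g)⟩ =
            (((Fintype.card Θ : ℝ) ^ (-((k / 2 : ℕ) : ℝ)) *
              (Fintype.card Θ : ℝ) ^ ((1 - (((k + 1) / 2 : ℕ) : ℝ)) / 2) : ℝ) : ℂ) •
              Uel φ k g) → Φ' = Φ) ∧
      (∀ (x y : Submodule.span ℂ (Set.range (thetaS φ k)))
        (hxy : mulAk k x.val y.val ∈
          Submodule.span ℂ (Set.range (thetaS φ k))),
        Φ ⟨mulAk k x.val y.val, hxy⟩ =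
          mulAk k (Φ x) (Φ y)) := by
  have hclosed : ∀ x ∈ Submodule.span ℂ (Set.range (thetaS φ k)),
      ∀ y ∈ Submodule.span ℂ (Set.range (thetaS φ k)),
        mulAk k x y ∈ Submodule.span ℂ (Set.range (thetaS φ k)) := by
    intro x hx
    induction hx using Submodule.span_induction with
    | mem x hxm =>
      intro y hy
      induction hy using Submodule.span_induction with
      | mem y hym =>
        obtain ⟨g, rfl⟩ := hxm
        obtain ⟨h, rfl⟩ := hym
        rw [key1]
        refine Submodule.sum_mem _ fun τ _ => Submodule.smul_mem _ _ ?_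
        exact Submodule.subset_span (Set.mem_range_self _)
      | zero => rw [mulAk_zero_right]; exact Submodule.zero_mem _
      | add y z hy hz ihy ihz =>
        rw [mulAk_add_right]; exact Submodule.add_mem _ ihy ihz
      | smul c y hy ihy => rw [mulAk_smul_right]; exact Submodule.smul_mem _ _ ihy
    | zero => intro y hy; rw [mulAk_zero_left]; exact Submodule.zero_mem _
    | add x z hx hz ihx ihz =>
      intro y hy
      rw [mulAk_add_left]; exact Submodule.add_mem _ (ihx y hy) (ihz y hy)
    | smul c x hx ihx =>
      intro y hy
      rw [mulAk_smul_left]; exact Submodule.smul_mem _ _ (ihx y hy)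
  have hLmul : ∀ x ∈ Submodule.span ℂ (Set.range (thetaS φ k)),
      ∀ y ∈ Submodule.span ℂ (Set.range (thetaS φ k)),
        Lmap φ k (mulAk k x y) = mulAk k (Lmap φ k x) (Lmap φ k y) := by
    intro x hx
    induction hx using Submodule.span_induction with
    | mem x hxm =>
      intro y hy
      induction hy using Submodule.span_induction with
      | mem y hym =>
        obtain ⟨g, rfl⟩ := hxm
        obtain ⟨h, rfl⟩ := hym
        exact Lmul_gen φ k hk g h
      | zero => simp only [mulAk_zero_right, map_zero]
      | add y z hy hz ihy ihz =>
        rw [mulAk_add_right, map_add, map_add, ihy, ihz, mulAk_add_right]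
      | smul c y hy ihy =>
        rw [mulAk_smul_right, map_smul, map_smul, ihy, mulAk_smul_right]
    | zero =>
      intro y hy
      simp only [mulAk_zero_left, map_zero]
    | add x z hx hz ihx ihz =>
      intro y hy
      rw [mulAk_add_left, map_add, map_add, ihx y hy, ihz y hy, mulAk_add_left]
    | smul c x hx ihx =>
      intro y hy
      rw [mulAk_smul_left, map_smul, map_smul, ihx y hy, mulAk_smul_left]
  refine ⟨hclosed, (Lmap φ k).comp (Submodule.span ℂ (Set.range (thetaS φ k))).subtype,
    fun g => ?_, fun Φ' hΦ' => ?_, fun x y hxy => ?_⟩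
  · exact Lmap_thetaS φ k g
  · apply LinearMap.ext
    rintro ⟨v, hv⟩
    induction hv using Submodule.span_induction with
    | mem v hvm =>
      obtain ⟨g, rfl⟩ := hvm
      exact (hΦ' g).trans (by
        rw [LinearMap.comp_apply, Submodule.subtype_apply]
        exact (Lmap_thetaS φ k g).symm)
    | zero =>
      have hz : (⟨0, Submodule.zero_mem _⟩ :
          Submodule.span ℂ (Set.range (thetaS φ k))) = 0 := rfl
      rw [hz, map_zero, map_zero]
    | add v w hv hw ihv ihw =>
      have ha : (⟨v + w, Submodule.add_mem _ hv hw⟩ :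
          Submodule.span ℂ (Set.range (thetaS φ k))) = ⟨v, hv⟩ + ⟨w, hw⟩ := rfl
      rw [ha, map_add, map_add, ihv, ihw]
    | smul c v hv ihv =>
      have hs : (⟨c • v, Submodule.smul_mem _ c hv⟩ :
          Submodule.span ℂ (Set.range (thetaS φ k))) = c • ⟨v, hv⟩ := rfl
      rw [hs, map_smul, map_smul, ihv]
  · rw [LinearMap.comp_apply, Submodule.subtype_apply]
    exact hLmul x.val x.property y.val y.property

end
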